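/- There is no first-order formula ψ(x, y) with two free variables over the language with a single binary relation symbol such that for every dimension n ≥ 1 and all partial instances e, e' of dimension n, the structure C_n ⊨ ψ(e, e') if and only if e ⊑ e' (e is subsumed by e'). -/
import Mathlib


open FirstOrder FirstOrder.Language

abbrev PI (n : ℕ) : Type := Fin n → Option Bool

def Subs {n : ℕ} (e e' : PI n) : Prop := ∀ i, e i ≠ none → e' i = e i

noncomputable def undefCard {n : ℕ} (e : PI n) : ℕ := Set.ncard {i | e i = none}

/-- `e ⪯ e'` iff `|e_⊥| ≥ |e'_⊥|`. -/
def Lel {n : ℕ} (e e' : PI n) : Prop := undefCard e' ≤ undefCard e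

/-- The language with a single binary relation symbol. -/
def lelLang : Language where
  Functions _ := Empty
  Relations n := match n with
    | 2 => Unit
    | _ => Empty

/-- The structure `C_n`: partial instances of dimension `n` with the relation `⪯`. -/
instance lelStruct (n : ℕ) : lelLang.Structure (PI n) where
  funMap := fun {_} f => f.elim
  RelMap := fun {k} r v => match k, r with
    | 2, _ => Lel (v 0) (v 1)

/-- the two total instances we swap -/
def eT : PI 2 := fun _ => some true
def eF : PI 2 := fun _ => some false

lemma undefCard_swap (x : PI 2) :
    undefCard (Equiv.swap eT eF x) = undefCard x := by
  rcases eq_or_ne x eT with rfl | hT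
  · rw [Equiv.swap_apply_left]
    simp [undefCard, eT, eF]
  rcases eq_or_ne x eF with rfl | hF
  · rw [Equiv.swap_apply_right]
    simp [undefCard, eT, eF]
  · rw [Equiv.swap_apply_of_ne_of_ne hT hF]

/-- the swap as an automorphism of C₂ -/
noncomputable def swapAut : (PI 2) ≃[lelLang] (PI 2) where
  toEquiv := Equiv.swap eT eF
  map_fun' := fun {k} f _ => f.elim
  map_rel' := by
    intro k r x
    match k, r with
    | 2, _ =>
      show Lel _ _ ↔ Lel _ _
      unfold Lel
      simp only [Function.comp_apply, Equiv.toFun_as_coe]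
      rw [undefCard_swap, undefCard_swap]

theorem stmt2 :
    ¬ ∃ ψ : lelLang.Formula (Fin 2),
      ∀ (n : ℕ), 1 ≤ n → ∀ (e e' : PI n),
        (ψ.Realize ![e, e'] ↔ Subs e e') := by
  rintro ⟨ψ, hψ⟩
  set e1 : PI 2 := ![none, some true] with he1
  have h1 : Subs e1 eT := by
    intro i hi
    fin_cases i
    · simp [e1] at hi
    · simp [e1, eT]
  have h2 : ¬ Subs e1 eF := by
    intro h
    have := h 1 (by simp [e1])
    simp [e1, eF] at this
  have hr1 : ψ.Realize ![e1, eT] := (hψ 2 (by norm_num) e1 eT).2 h1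
  have key : ψ.Realize (swapAut ∘ ![e1, eT]) ↔ ψ.Realize ![e1, eT] :=
    StrongHomClass.realize_formula swapAut ψ
  have hcomp : swapAut ∘ ![e1, eT] = ![e1, eF] := by
    funext i
    fin_cases i
    · show Equiv.swap eT eF e1 = e1
      apply Equiv.swap_apply_of_ne_of_ne
      · intro h
        have := congrFun h 0
        simp [e1, eT] at this
      · intro h
        have := congrFun h 0
        simp [e1, eF] at this
    · show Equiv.swap eT eF eT = eF
      exact Equiv.swap_apply_left _ _
  rw [hcomp] at key
  exact h2 ((hψ 2 (by norm_num) e1 eF).1 (key.mpr hr1))
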